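/- Let G be an undirected graph on {1,…,n} with edge set E, d ≥ 1, and for each edge {i,j} let u*_{ij} ∈ ℝ^d be a unit vector with u*_{ji} = −u*_{ij}. Define ψ(x) = ∑_{{i,j} ∈ E} (1/2)‖x_j − x_i‖·‖u_{ij}(x) − u*_{ij}‖². At every configuration x with x_i ≠ x_j for all edges {i,j} ∈ E, ψ is differentiable and its partial gradient with respect to x_i equals −∑_{j ∈ N_i} (u_{ij}(x) − u*_{ij}). -/

import Mathlib

open Finset RealInnerProductSpace

section aux
variable {F : Type*} [NormedAddCommGroup F] [InnerProductSpace ℝ F]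

lemma keyF {u : F} (hu : ‖u‖ = 1) (v : F) :
    (1 / 2) * ‖v‖ * ‖‖v‖⁻¹ • v - u‖ ^ 2 = ‖v‖ - ⟪v, u⟫ := by
  rcases eq_or_ne v 0 with rfl | hv
  · simp
  · have hv' : ‖v‖ ≠ 0 := norm_ne_zero_iff.mpr hv
    rw [norm_sub_sq_real, norm_smul, norm_inv, norm_norm, inv_mul_cancel₀ hv',
      real_inner_smul_left, hu]
    field_simp
    ring

lemma lemNorm (c p : F) (h : c ≠ p) :
    HasFDerivAt (fun y => ‖c - y‖) (-(innerSL ℝ (‖c - p‖⁻¹ • (c - p)))) p := by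
  have hne : c - p ≠ 0 := sub_ne_zero.mpr h
  have h1 : HasFDerivAt (fun y : F => c - y)
      ((0 : F →L[ℝ] F) - ContinuousLinearMap.id ℝ F) p :=
    (hasFDerivAt_const c p).sub (hasFDerivAt_id p)
  have h2 := h1.norm_sq
  have h3 := h2.sqrt (by simpa using pow_ne_zero 2 (norm_ne_zero_iff.mpr hne))
  have h4 : (fun y => Real.sqrt (‖c - y‖ ^ 2)) = fun y => ‖c - y‖ := by
    funext y; rw [Real.sqrt_sq (norm_nonneg _)]
  rw [h4] at h3
  convert h3 using 1
  ext y
  have hnn : ‖c - p‖ ≠ 0 := norm_ne_zero_iff.mpr hne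
  simp [Real.sqrt_sq (norm_nonneg _), real_inner_smul_left]
  field_simp
  ring

lemma lemNorm' (c p : F) (h : p ≠ c) :
    HasFDerivAt (fun y => ‖y - c‖) (innerSL ℝ (‖p - c‖⁻¹ • (p - c))) p := by
  have hne : p - c ≠ 0 := sub_ne_zero.mpr h
  have h1 : HasFDerivAt (fun y : F => y - c)
      (ContinuousLinearMap.id ℝ F - (0 : F →L[ℝ] F)) p :=
    (hasFDerivAt_id p).sub (hasFDerivAt_const c p)
  have h2 := h1.norm_sq
  have h3 := h2.sqrt (by simpa using pow_ne_zero 2 (norm_ne_zero_iff.mpr hne))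
  have h4 : (fun y => Real.sqrt (‖y - c‖ ^ 2)) = fun y => ‖y - c‖ := by
    funext y; rw [Real.sqrt_sq (norm_nonneg _)]
  rw [h4] at h3
  convert h3 using 1
  ext y
  have hnn : ‖p - c‖ ≠ 0 := norm_ne_zero_iff.mpr hne
  simp [Real.sqrt_sq (norm_nonneg _), real_inner_smul_left]
  field_simp

lemma lemInner (c u p : F) :
    HasFDerivAt (fun y => ⟪c - y, u⟫) (-(innerSL ℝ u)) p := by
  have h1 : HasFDerivAt (fun y : F => ⟪c, u⟫ - ⟪y, u⟫) ((0 : F →L[ℝ] ℝ) - innerSL ℝ u) p := by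
    refine (hasFDerivAt_const _ p).sub ?_
    have := (innerSL ℝ u).hasFDerivAt (x := p)
    exact this.congr_of_eventuallyEq (Filter.Eventually.of_forall fun y => by
      simp [real_inner_comm])
  have h2 : (fun y : F => ⟪c, u⟫ - ⟪y, u⟫) = fun y => ⟪c - y, u⟫ := by
    funext y; rw [inner_sub_left]
  rw [h2] at h1
  simpa using h1

lemma lemInner' (c u p : F) :
    HasFDerivAt (fun y => ⟪y - c, u⟫) (innerSL ℝ u) p := by
  have h1 : HasFDerivAt (fun y : F => ⟪y, u⟫ - ⟪c, u⟫) (innerSL ℝ u - (0 : F →L[ℝ] ℝ)) p := by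
    refine HasFDerivAt.sub ?_ (hasFDerivAt_const _ p)
    have := (innerSL ℝ u).hasFDerivAt (x := p)
    exact this.congr_of_eventuallyEq (Filter.Eventually.of_forall fun y => by
      simp [real_inner_comm])
  have h2 : (fun y : F => ⟪y, u⟫ - ⟪c, u⟫) = fun y => ⟪y - c, u⟫ := by
    funext y; rw [inner_sub_left]
  rw [h2] at h1
  simpa using h1

end aux

/-- The bearing from agent `i` to agent `j`: the unit vector pointing from `x i` to `x j`,
or `0` when the agents coincide. -/
noncomputable def bearing {d n : ℕ} (x : Fin n → EuclideanSpace ℝ (Fin d)) (i j : Fin n) :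
    EuclideanSpace ℝ (Fin d) :=
  ‖x j - x i‖⁻¹ • (x j - x i)

/-- The formation potential `ψ(x) = ∑_{{i,j} ∈ E} (1/2) ‖x_j - x_i‖ ‖u_{ij}(x) - u*_{ij}‖²`,
with each unordered edge counted once (hence half the sum over ordered adjacent pairs;
the summand is symmetric in `i, j` since `u*_{ji} = -u*_{ij}`). -/
noncomputable def formPotential {d n : ℕ} (G : SimpleGraph (Fin n)) [DecidableRel G.Adj]
    (ustar : Fin n → Fin n → EuclideanSpace ℝ (Fin d))
    (x : Fin n → EuclideanSpace ℝ (Fin d)) : ℝ :=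
  (1 / 2) * ∑ i, ∑ j ∈ G.neighborFinset i,
    (1 / 2) * ‖x j - x i‖ * ‖bearing x i j - ustar i j‖ ^ 2

theorem stmt_9 {d n : ℕ} (hd : 1 ≤ d)
    (G : SimpleGraph (Fin n)) [DecidableRel G.Adj]
    (ustar : Fin n → Fin n → EuclideanSpace ℝ (Fin d))
    (hunit : ∀ i j, G.Adj i j → ‖ustar i j‖ = 1)
    (hskew : ∀ i j, G.Adj i j → ustar j i = -ustar i j)
    (x : Fin n → EuclideanSpace ℝ (Fin d))
    (hfree : ∀ i j, G.Adj i j → x i ≠ x j) :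
    ∀ i, HasGradientAt (fun y => formPotential G ustar (Function.update x i y))
      (-(∑ j ∈ G.neighborFinset i, (bearing x i j - ustar i j))) (x i) := by
  intro i
  rw [hasGradientAt_iff_hasFDerivAt]
  -- rewrite the potential in linear form
  have hfun : (fun y => formPotential G ustar (Function.update x i y)) =
      fun y => (1 / 2) * ∑ i', ∑ j ∈ G.neighborFinset i',
        (‖Function.update x i y j - Function.update x i y i'‖ -
          ⟪Function.update x i y j - Function.update x i y i', ustar i' j⟫) := by
    funext y
    unfold formPotential bearing
    congr 1
    refine Finset.sum_congr rfl fun i' _ => Finset.sum_congr rfl fun j hj => ?_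
    exact keyF (hunit i' j (by rwa [SimpleGraph.mem_neighborFinset] at hj)) _
  rw [hfun]
  -- the gradient vector of each summand
  set g2 : Fin n → Fin n → EuclideanSpace ℝ (Fin d) := fun i' j =>
    if i' = i then ustar i j - bearing x i j
    else if j = i then ustar i i' - bearing x i i' else 0 with hg2
  have hterm : ∀ i' ∈ (Finset.univ : Finset (Fin n)), HasFDerivAt
      (fun y => ∑ j ∈ G.neighborFinset i',
        (‖Function.update x i y j - Function.update x i y i'‖ -
          ⟪Function.update x i y j - Function.update x i y i', ustar i' j⟫))
      (∑ j ∈ G.neighborFinset i', innerSL ℝ (g2 i' j)) (x i) := by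
    intro i' _
    refine HasFDerivAt.fun_sum fun j hj => ?_
    have hadj : G.Adj i' j := by rwa [SimpleGraph.mem_neighborFinset] at hj
    by_cases hi' : i' = i
    · subst hi'
      have hji : j ≠ i' := hadj.ne'
      have hne : x j ≠ x i' := (hfree i' j hadj).symm
      simp only [Function.update_self, Function.update_of_ne hji, hg2, if_pos rfl]
      have := (lemNorm (x j) (x i') hne).sub (lemInner (x j) (ustar i' j) (x i'))
      refine this.congr_fderiv ?_
      ext y
      simp [bearing, inner_sub_left, real_inner_smul_left]
      ring
    · by_cases hj' : j = i
      · subst hj'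
        have hne : x j ≠ x i' := hfree i' j hadj |>.symm
        have hus : ustar i' j = -ustar j i' := hskew j i' hadj.symm
        simp only [Function.update_self, Function.update_of_ne hi', hg2,
          if_neg hi', if_pos rfl]
        have := (lemNorm' (x i') (x j) hne).sub (lemInner' (x i') (ustar i' j) (x j))
        refine this.congr_fderiv ?_
        rw [hus]
        ext y
        simp [bearing, inner_sub_left, real_inner_smul_left, norm_sub_rev (x i') (x j),
          inner_neg_left]
        ring
      · simp only [Function.update_of_ne hi', Function.update_of_ne hj', hg2,
          if_neg hi', if_neg hj']
        refine (hasFDerivAt_const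
          (‖x j - x i'‖ - ⟪x j - x i', ustar i' j⟫) (x i)).congr_fderiv ?_
        simp
  have hsum := (HasFDerivAt.fun_sum hterm).const_mul (1 / 2 : ℝ)
  refine hsum.congr_fderiv ?_
  -- it remains to identify the derivative
  have hvec : ∑ i', ∑ j ∈ G.neighborFinset i', g2 i' j
      = (2 : ℝ) • ∑ j ∈ G.neighborFinset i, (ustar i j - bearing x i j) := by
    have hpt : ∀ i', ∑ j ∈ G.neighborFinset i', g2 i' j
        = (if i' = i then ∑ j ∈ G.neighborFinset i, (ustar i j - bearing x i j) else 0)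
          + (if i' ∈ G.neighborFinset i then ustar i i' - bearing x i i' else 0) := by
      intro i'
      by_cases hi' : i' = i
      · subst hi'
        have : i' ∉ G.neighborFinset i' := by
          simp
        rw [if_pos rfl, if_neg this, add_zero]
        exact Finset.sum_congr rfl fun j hj => by simp [hg2]
      · rw [if_neg hi', zero_add]
        have h1 : ∀ j ∈ G.neighborFinset i', g2 i' j
            = if j = i then ustar i i' - bearing x i i' else 0 := by
          intro j hj
          simp [hg2, hi']
        rw [Finset.sum_congr rfl h1, Finset.sum_ite_eq' (G.neighborFinset i') i
          (fun _ => ustar i i' - bearing x i i')]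
        congr 1
        simp [SimpleGraph.adj_comm]
    rw [Finset.sum_congr rfl (fun i' _ => hpt i'), Finset.sum_add_distrib,
      Fintype.sum_ite_eq' i (fun _ => ∑ j ∈ G.neighborFinset i, (ustar i j - bearing x i j)),
      Fintype.sum_ite_mem, two_smul]
  ext y
  simp only [ContinuousLinearMap.smul_apply, ContinuousLinearMap.coe_sum', Finset.sum_apply,
    innerSL_apply_apply, InnerProductSpace.toDual_apply_apply]
  have : ∑ i', ∑ j ∈ G.neighborFinset i', ⟪g2 i' j, y⟫
      = ⟪∑ i', ∑ j ∈ G.neighborFinset i', g2 i' j, y⟫ := by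
    rw [sum_inner]
    exact Finset.sum_congr rfl fun i' _ => (sum_inner _ _ _).symm
  rw [this, hvec]
  rw [inner_neg_left, sum_inner, inner_smul_left, sum_inner]
  simp only [inner_sub_left, starRingEnd_apply, star_trivial, smul_eq_mul,
    Finset.sum_sub_distrib]
  ring
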